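/- Suppose real-valued functions a, b, f on an interval satisfy: (1) a' + a² = b' + b², (2) f'' = λ + (n-1)(a' + a²), (3) (a+b)f' = (n-1)ab + λ, where n ≥ 4 is an integer and λ ∈ ℝ. Then (a' + a² + ab)·((n-1)ab + λ) = 0 pointwise. -/

import Mathlib

/-- From a'+a² = b'+b², f'' = λ+(n-1)(a'+a²) and (a+b)f' = (n-1)ab+λ one deduces
(a'+a²+ab)·((n-1)ab+λ) = 0 pointwise. -/
theorem soliton_key_product_zero
    (n : ℕ) (hn : 4 ≤ n) (lam : ℝ) (A B : ℝ) (hAB : A < B)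
    (a b f : ℝ → ℝ)
    (ha : ∀ s ∈ Set.Ioo A B, DifferentiableAt ℝ a s)
    (hb : ∀ s ∈ Set.Ioo A B, DifferentiableAt ℝ b s)
    (hf : ∀ s ∈ Set.Ioo A B, DifferentiableAt ℝ f s)
    (hf' : ∀ s ∈ Set.Ioo A B, DifferentiableAt ℝ (deriv f) s)
    (h1 : ∀ s ∈ Set.Ioo A B, deriv a s + (a s) ^ 2 = deriv b s + (b s) ^ 2)
    (h2 : ∀ s ∈ Set.Ioo A B,
      deriv (deriv f) s = lam + (n - 1) * (deriv a s + (a s) ^ 2))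
    (h3 : ∀ s ∈ Set.Ioo A B,
      (a s + b s) * deriv f s = (n - 1) * (a s * b s) + lam) :
    ∀ s ∈ Set.Ioo A B,
      (deriv a s + (a s) ^ 2 + a s * b s) * ((n - 1) * (a s * b s) + lam) = 0 := by
  intro s hs
  have hmem : Set.Ioo A B ∈ nhds s := isOpen_Ioo.mem_nhds hs
  have heq : (fun t => (a t + b t) * deriv f t)
      =ᶠ[nhds s] fun t => (↑n - 1) * (a t * b t) + lam :=
    Filter.eventuallyEq_of_mem hmem h3
  have hderiv := heq.deriv_eq
  have hL : deriv (fun t => (a t + b t) * deriv f t) s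
      = (deriv a s + deriv b s) * deriv f s + (a s + b s) * deriv (deriv f) s := by
    rw [deriv_fun_mul ((ha s hs).fun_add (hb s hs)) (hf' s hs), deriv_fun_add (ha s hs) (hb s hs)]
  have hR : deriv (fun t => (↑n - 1) * (a t * b t) + lam) s
      = (↑n - 1) * (deriv a s * b s + a s * deriv b s) := by
    rw [deriv_add_const, deriv_const_mul (d := fun t => a t * b t) _ ((ha s hs).mul (hb s hs)),
      deriv_fun_mul (ha s hs) (hb s hs)]
  have hE : (deriv a s + deriv b s) * deriv f s + (a s + b s) * deriv (deriv f) s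
      = (↑n - 1) * (deriv a s * b s + a s * deriv b s) := by
    rw [← hL, ← hR, hderiv]
  have e1 := h1 s hs
  have e2 := h2 s hs
  have e3 := h3 s hs
  have key : 2 * ((deriv a s + (a s) ^ 2 + a s * b s)
      * ((↑n - 1) * (a s * b s) + lam)) = 0 := by
    linear_combination (a s + b s) * hE - (deriv a s + deriv b s) * e3
      - (a s + b s) ^ 2 * e2
      + ((↑n - 1) * (a s * b s) + lam - (↑n - 1) * (a s + b s) * a s) * e1
  linarith
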